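/- Let G be a graph, C a longest cycle in G, and P = x₁→x₂ a longest path in G∖C with N_C(x₁) = N_C(x₂). Let ξ_a, ξ_b be two distinct common neighbors on C, with elementary segments I_a, I_b. If y is an interior vertex of I_a and z is an interior vertex of I_b such that |ξ_a→y| + |ξ_b→z| ≤ p̄ + 2 (arc lengths along the orientation of C, where p̄ is the length of P), then yz ∉ E(G). -/

import Mathlib

open SimpleGraph

namespace ToughPaper

variable {V : Type*}

/-- Number of connected components of the subgraph induced on the complement of `S`. -/
noncomputable def numComp (G : SimpleGraph V) (S : Set V) : ℕ :=
  Nat.card (G.induce Sᶜ).ConnectedComponent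

/-- The toughness of `G` is greater than 1: `|S| > s(G∖S)` for every cutset `S`. -/
def ToughGtOne [Fintype V] (G : SimpleGraph V) : Prop :=
  ∀ S : Finset V, 1 < numComp G ↑S → numComp G ↑S < S.card

/-- The toughness of `G` is at most 1: some cutset `S` has `|S| ≤ s(G∖S)`. -/
def ToughLeOne [Fintype V] (G : SimpleGraph V) : Prop :=
  ∃ S : Finset V, 1 < numComp G ↑S ∧ S.card ≤ numComp G ↑S

/-- `G` is `k`-connected: more than `k` vertices and no cutset of size `< k`. -/
def KConnected [Fintype V] (k : ℕ) (G : SimpleGraph V) : Prop :=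
  k < Fintype.card V ∧ ∀ S : Finset V, S.card < k → (G.induce (↑S : Set V)ᶜ).Connected

/-- The (vertex) connectivity `κ(G)`. -/
noncomputable def conn [Fintype V] (G : SimpleGraph V) : ℕ :=
  sSup {k | KConnected k G}

/-- `C` is a longest cycle in `G`. -/
def IsLongestCycle (G : SimpleGraph V) {v : V} (C : G.Walk v v) : Prop :=
  C.IsCycle ∧ ∀ (u : V) (D : G.Walk u u), D.IsCycle → D.length ≤ C.length

/-- `P` is a longest path among paths of `G` avoiding the vertex list `W`
(i.e. a longest path of `G ∖ W`). -/
def IsLongestPathOff (G : SimpleGraph V) (W : List V) {x y : V} (P : G.Walk x y) : Prop :=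
  P.IsPath ∧ (∀ u ∈ P.support, u ∉ W) ∧
  ∀ (a b : V) (Q : G.Walk a b), Q.IsPath → (∀ u ∈ Q.support, u ∉ W) → Q.length ≤ P.length

/-- The neighbors of `x` lying on the vertex list `W` (e.g. `N_C(x)` for `W = C.support`). -/
def nbrsOn (G : SimpleGraph V) (W : List V) (x : V) : Set V :=
  {u | u ∈ W ∧ G.Adj x u}

/-- The number of edges of the oriented arc of the closed walk `C` from `a` to `b`. -/
noncomputable def arcLen [DecidableEq V] {G : SimpleGraph V} {v : V}
    (C : G.Walk v v) (a b : V) : ℕ :=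
  if h : ∃ (ha : a ∈ C.support), b ∈ (C.rotate a ha).support then
    ((C.rotate a h.choose).takeUntil b h.choose_spec).length
  else 0

/-- The vertices of the oriented arc of `C` from `a` to `b`. -/
noncomputable def arcSupport [DecidableEq V] {G : SimpleGraph V} {v : V}
    (C : G.Walk v v) (a b : V) : List V :=
  if h : ∃ (ha : a ∈ C.support), b ∈ (C.rotate a ha).support then
    ((C.rotate a h.choose).takeUntil b h.choose_spec).support
  else []

/-- The successor of `a` on the oriented closed walk `C`. -/
noncomputable def cycSucc [DecidableEq V] {G : SimpleGraph V} {v : V}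
    (C : G.Walk v v) (a : V) : V :=
  if h : a ∈ C.support then (C.rotate a h).getVert 1 else a

/-- The predecessor of `a` on the oriented closed walk `C`. -/
noncomputable def cycPred [DecidableEq V] {G : SimpleGraph V} {v : V}
    (C : G.Walk v v) (a : V) : V :=
  if h : a ∈ C.support then (C.rotate a h).getVert ((C.rotate a h).length - 1) else a

/-- `a` and `b` are consecutive elements of `N` on `C`; the arc `a→b` is then an
elementary segment created by `N`. -/
def ConsecOnC [DecidableEq V] {G : SimpleGraph V} {v : V}
    (C : G.Walk v v) (N : Set V) (a b : V) : Prop :=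
  a ∈ N ∧ b ∈ N ∧ a ≠ b ∧ ∀ w ∈ arcSupport C a b, w ≠ a → w ≠ b → w ∉ N

/-- `u` is an interior vertex of the arc `a→b` of `C`. -/
def InteriorArc [DecidableEq V] {G : SimpleGraph V} {v : V}
    (C : G.Walk v v) (a b : V) (u : V) : Prop :=
  u ∈ arcSupport C a b ∧ u ≠ a ∧ u ≠ b

/-- `L` is an intermediate path between the elementary segments `a₁→b₁` and `a₂→b₂`
(created by `N` on `C`), relative to the path with vertex list `Psupp`. -/
def IsInterPath [DecidableEq V] (G : SimpleGraph V) {v z w : V} (C : G.Walk v v)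
    (Psupp : List V) (N : Set V) (a₁ b₁ a₂ b₂ : V) (L : G.Walk z w) : Prop :=
  ConsecOnC C N a₁ b₁ ∧ ConsecOnC C N a₂ b₂ ∧ a₁ ≠ a₂ ∧
  L.IsPath ∧ 0 < L.length ∧ InteriorArc C a₁ b₁ z ∧ InteriorArc C a₂ b₂ w ∧
  ∀ u ∈ L.support, (u ∈ C.support ∨ u ∈ Psupp) → u = z ∨ u = w

/-- Vertex type of the Petersen graph: 2-element subsets of a 5-element set. -/
def PetersenV := {s : Finset (Fin 5) // s.card = 2}

instance : Fintype PetersenV := inferInstanceAs (Fintype {s : Finset (Fin 5) // s.card = 2})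
instance : DecidableEq PetersenV := inferInstanceAs (DecidableEq {s : Finset (Fin 5) // s.card = 2})

/-- The Petersen graph as the Kneser graph `K(5,2)`. -/
def petersen : SimpleGraph PetersenV where
  Adj a b := Disjoint a.1 b.1 ∧ a ≠ b
  symm := ⟨fun a b h => ⟨h.1.symm, h.2.symm⟩⟩
  loopless := ⟨fun a h => h.2 rfl⟩

instance : DecidableRel petersen.Adj :=
  fun a b => inferInstanceAs (Decidable (Disjoint a.1 b.1 ∧ a ≠ b))



section Helpers
open SimpleGraph.Walk
variable {V : Type*} [DecidableEq V] {G : SimpleGraph V}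
set_option linter.unusedSectionVars false

lemma takeUntil_start' {a c : V} (q : G.Walk a c) (h : a ∈ q.support) :
    q.takeUntil a h = Walk.nil := by
  cases q with
  | nil => rfl
  | cons r p => simp [Walk.takeUntil]

lemma dropUntil_start' {a c : V} (q : G.Walk a c) (h : a ∈ q.support) :
    q.dropUntil a h = q := by
  cases q with
  | nil => rfl
  | cons r p => simp [Walk.dropUntil]

lemma takeUntil_append_left {a b c u : V} (p : G.Walk a b) (q : G.Walk b c)
    (hu : u ∈ p.support) (h : u ∈ (p.append q).support) :
    (p.append q).takeUntil u h = p.takeUntil u hu := by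
  induction p with
  | nil =>
    rw [mem_support_nil_iff] at hu; subst hu
    rw [takeUntil_start', takeUntil_start']
  | @cons d e f r p ih =>
    by_cases hau : d = u
    · subst hau
      simp [Walk.takeUntil]
    · show (Walk.cons r (p.append q)).takeUntil u h = _
      simp only [Walk.takeUntil]
      rw [dif_neg hau, dif_neg hau]
      congr 1
      apply ih

lemma dropUntil_append_left {a b c u : V} (p : G.Walk a b) (q : G.Walk b c)
    (hu : u ∈ p.support) (h : u ∈ (p.append q).support) :
    (p.append q).dropUntil u h = (p.dropUntil u hu).append q := by
  induction p with
  | nil =>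
    rw [mem_support_nil_iff] at hu; subst hu
    rw [dropUntil_start', dropUntil_start']
  | @cons d e f r p ih =>
    by_cases hau : d = u
    · subst hau
      simp [Walk.dropUntil]
    · show (Walk.cons r (p.append q)).dropUntil u h = _
      simp only [Walk.dropUntil]
      rw [dif_neg hau, dif_neg hau]
      apply ih

lemma takeUntil_append_right {a b c u : V} (p : G.Walk a b) (q : G.Walk b c)
    (hu : u ∉ p.support) (hq : u ∈ q.support) (h : u ∈ (p.append q).support) :
    (p.append q).takeUntil u h = p.append (q.takeUntil u hq) := by
  induction p with
  | nil => rfl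
  | @cons d e f r p ih =>
    have hau : d ≠ u := fun he => hu (he ▸ Walk.start_mem_support _)
    show (Walk.cons r (p.append q)).takeUntil u h = _
    simp only [Walk.takeUntil]
    rw [dif_neg hau]
    show Walk.cons r ((p.append q).takeUntil u _) = Walk.cons r (p.append (q.takeUntil u hq))
    congr 1
    apply ih
    exact fun hm => hu (List.mem_cons_of_mem _ hm)

lemma dropUntil_append_right {a b c u : V} (p : G.Walk a b) (q : G.Walk b c)
    (hu : u ∉ p.support) (hq : u ∈ q.support) (h : u ∈ (p.append q).support) :
    (p.append q).dropUntil u h = q.dropUntil u hq := by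
  induction p with
  | nil => rfl
  | @cons d e f r p ih =>
    have hau : d ≠ u := fun he => hu (he ▸ Walk.start_mem_support _)
    show (Walk.cons r (p.append q)).dropUntil u h = _
    simp only [Walk.dropUntil]
    rw [dif_neg hau]
    apply ih
    exact fun hm => hu (List.mem_cons_of_mem _ hm)

lemma takeUntil_congr {a b u : V} {p q : G.Walk a b} (hpq : p = q) (h : u ∈ p.support) :
    p.takeUntil u h = q.takeUntil u (hpq ▸ h) := by subst hpq; rfl

lemma dropUntil_congr {a b u : V} {p q : G.Walk a b} (hpq : p = q) (h : u ∈ p.support) :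
    p.dropUntil u h = q.dropUntil u (hpq ▸ h) := by subst hpq; rfl

lemma rotate_congr {a u : V} {p q : G.Walk a a} (hpq : p = q) (h : u ∈ p.support) :
    p.rotate u h = q.rotate u (hpq ▸ h) := by subst hpq; rfl

lemma takeUntil_takeUntil' {a b u w : V} (p : G.Walk a b) (hu : u ∈ p.support)
    (hw : w ∈ (p.takeUntil u hu).support) (h : w ∈ p.support) :
    p.takeUntil w h = (p.takeUntil u hu).takeUntil w hw := by
  have hspec := (p.take_spec hu).symm
  rw [takeUntil_congr hspec h]
  exact takeUntil_append_left _ _ hw _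

lemma end_mem_support_tail {x y : V} (p : G.Walk x y) (hxy : x ≠ y) :
    y ∈ p.support.tail := by
  cases p with
  | nil => exact absurd rfl hxy
  | cons r p => exact Walk.end_mem_support p

lemma takeUntil_end {x y : V} (p : G.Walk x y) (h : y ∈ p.support)
    (hc : p.support.count y ≤ 1) : p.takeUntil y h = p := by
  induction p with
  | nil => rw [takeUntil_start']
  | @cons d e f r p ih =>
    have hxy : d ≠ f := by
      intro he; subst he
      have h1 : 1 ≤ p.support.count d := List.count_pos_iff.2 (Walk.end_mem_support p)
      rw [Walk.support_cons, List.count_cons_self] at hc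
      omega
    show (Walk.cons r p).takeUntil f h = _
    simp only [Walk.takeUntil]
    rw [dif_neg hxy]
    congr 1
    apply ih
    rw [Walk.support_cons, List.count_cons_of_ne hxy] at hc
    exact hc

lemma dropUntil_end {x y : V} (p : G.Walk x y) (h : y ∈ p.support)
    (hc : p.support.count y ≤ 1) : p.dropUntil y h = Walk.nil := by
  induction p with
  | nil => rw [dropUntil_start']
  | @cons d e f r p ih =>
    have hxy : d ≠ f := by
      intro he; subst he
      have h1 : 1 ≤ p.support.count d := List.count_pos_iff.2 (Walk.end_mem_support p)
      rw [Walk.support_cons, List.count_cons_self] at hc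
      omega
    show (Walk.cons r p).dropUntil f h = _
    simp only [Walk.dropUntil]
    rw [dif_neg hxy]
    apply ih
    rw [Walk.support_cons, List.count_cons_of_ne hxy] at hc
    exact hc

lemma mem_rotate_support {v u w : V} {c : G.Walk v v} (h : u ∈ c.support) :
    w ∈ (c.rotate u h).support ↔ w ∈ c.support := by
  show w ∈ ((c.dropUntil u h).append (c.takeUntil u h)).support ↔ _
  rw [Walk.mem_support_append_iff]
  conv_rhs => rw [← c.take_spec h]
  rw [Walk.mem_support_append_iff]
  exact or_comm

lemma length_rotate {v u : V} {c : G.Walk v v} (h : u ∈ c.support) :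
    (c.rotate u h).length = c.length := by
  show ((c.dropUntil u h).append (c.takeUntil u h)).length = _
  conv_rhs => rw [← c.take_spec h]
  rw [Walk.length_append, Walk.length_append, Nat.add_comm]

lemma count_eq_one_of_cycle {a : V} {Q : G.Walk a a} (hQ : Q.IsCycle)
    {w : V} (hwa : w ≠ a) (hw : w ∈ Q.support) : Q.support.count w = 1 := by
  have htail : w ∈ Q.support.tail := by
    rw [Walk.support_eq_cons] at hw
    cases hw with
    | head => exact absurd rfl hwa
    | tail _ h => exact h
  have h1 : Q.support.count w = Q.support.tail.count w := by
    conv_lhs => rw [Walk.support_eq_cons]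
    rw [List.count_cons_of_ne (Ne.symm hwa)]
  rw [h1]
  exact le_antisymm (List.nodup_iff_count_le_one.mp hQ.support_nodup w)
    (List.count_pos_iff.2 htail)

lemma rotate_rotate {a b c : V} {Q : G.Walk a a} (hQ : Q.IsCycle)
    (h1 : b ∈ Q.support) (h2 : c ∈ Q.support) (h3 : c ∈ (Q.rotate b h1).support)
    (hcb : c ≠ b) : (Q.rotate b h1).rotate c h3 = Q.rotate c h2 := by
  by_cases hba : b = a
  · subst hba
    have e1 : Q.rotate b h1 = Q := by
      show (Q.dropUntil b h1).append (Q.takeUntil b h1) = Q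
      rw [dropUntil_start', takeUntil_start', Walk.append_nil]
    rw [rotate_congr e1]
  · set X := Q.takeUntil b h1 with hX
    set Y := Q.dropUntil b h1 with hY
    have hspec : X.append Y = Q := Q.take_spec h1
    have hsupQ : Q.support = X.support ++ Y.support.tail := by
      rw [← hspec, Walk.support_append]
    have haYt : a ∈ Y.support.tail := end_mem_support_tail Y hba
    have hrotQ : Q.rotate c h2 = (Q.dropUntil c h2).append (Q.takeUntil c h2) := rfl
    have hrot13 : (Q.rotate b h1).rotate c h3 =
        ((Y.append X).dropUntil c h3).append ((Y.append X).takeUntil c h3) := rfl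
    by_cases hca : c = a
    · subst hca
      -- count of c in Y.support is 1
      have hcntQ : Q.support.count c = 1 + Q.support.tail.count c := by
        conv_lhs => rw [Walk.support_eq_cons]
        rw [List.count_cons_self, Nat.add_comm]
      have hQt1 : Q.support.tail.count c ≤ 1 :=
        List.nodup_iff_count_le_one.mp hQ.support_nodup c
      have hQtail : Q.support.tail = X.support.tail ++ Y.support.tail := by
        rw [hsupQ, List.tail_append_of_ne_nil (Walk.support_ne_nil _)]
      have hYt1 : Y.support.tail.count c = 1 := by
        have := List.count_pos_iff.2 haYt
        have hsum : X.support.tail.count c + Y.support.tail.count c ≤ 1 := by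
          rw [← List.count_append, ← hQtail]; exact hQt1
        omega
      have hYcnt : Y.support.count c = 1 := by
        rw [Walk.support_eq_cons, List.count_cons_of_ne hba]
        exact hYt1
      have haY : c ∈ Y.support := Walk.end_mem_support Y
      have e_take : (Y.append X).takeUntil c h3 = Y := by
        rw [takeUntil_append_left Y X haY h3]
        exact takeUntil_end Y haY (le_of_eq hYcnt)
      have e_drop : (Y.append X).dropUntil c h3 = X := by
        rw [dropUntil_append_left Y X haY h3]
        rw [dropUntil_end Y haY (le_of_eq hYcnt)]
        exact Walk.nil_append X
      rw [hrot13, e_take, e_drop, hspec, hrotQ, dropUntil_start', takeUntil_start',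
        Walk.append_nil]
    · have hcnt1 : Q.support.count c = 1 := count_eq_one_of_cycle hQ hca h2
      have hcntsplit : X.support.count c + Y.support.tail.count c = 1 := by
        rw [← List.count_append, ← hsupQ]; exact hcnt1
      rcases List.mem_append.mp (hsupQ ▸ h2) with hcX | hcYt
      · have hcYt' : c ∉ Y.support.tail := by
          have := List.count_pos_iff.2 hcX
          intro hmem
          have := List.count_pos_iff.2 hmem
          omega
        have hcY : c ∉ Y.support := by
          rw [Walk.support_eq_cons]
          intro hmem
          cases hmem with
          | head => exact hcb rfl
          | tail _ h => exact hcYt' h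
        have e_take := takeUntil_append_right Y X hcY hcX h3
        have e_drop := dropUntil_append_right Y X hcY hcX h3
        have e_takeQ : Q.takeUntil c h2 = X.takeUntil c hcX := by
          rw [takeUntil_congr hspec.symm h2]
          exact takeUntil_append_left X Y hcX _
        have e_dropQ : Q.dropUntil c h2 = (X.dropUntil c hcX).append Y := by
          rw [dropUntil_congr hspec.symm h2]
          exact dropUntil_append_left X Y hcX _
        rw [hrot13, e_take, e_drop, hrotQ, e_takeQ, e_dropQ]
        exact Walk.append_assoc _ _ _
      · have hcY : c ∈ Y.support := List.mem_of_mem_tail hcYt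
        have hcX : c ∉ X.support := by
          have := List.count_pos_iff.2 hcYt
          intro hmem
          have := List.count_pos_iff.2 hmem
          omega
        have e_take := takeUntil_append_left Y X hcY h3
        have e_drop := dropUntil_append_left Y X hcY h3
        have e_takeQ : Q.takeUntil c h2 = X.append (Y.takeUntil c hcY) := by
          rw [takeUntil_congr hspec.symm h2]
          exact takeUntil_append_right X Y hcX hcY _
        have e_dropQ : Q.dropUntil c h2 = Y.dropUntil c hcY := by
          rw [dropUntil_congr hspec.symm h2]
          exact dropUntil_append_right X Y hcX hcY _
        rw [hrot13, e_take, e_drop, hrotQ, e_takeQ, e_dropQ]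
        exact (Walk.append_assoc _ _ _).symm

lemma arcSupport_exists {v a b w : V} {C : G.Walk v v} (h : w ∈ arcSupport C a b) :
    ∃ (ha : a ∈ C.support), b ∈ (C.rotate a ha).support := by
  by_cases hex : ∃ (ha : a ∈ C.support), b ∈ (C.rotate a ha).support
  · exact hex
  · rw [arcSupport, dif_neg hex] at h
    simp at h

lemma arcSupport_spec {v a b : V} {C : G.Walk v v} (haC : a ∈ C.support)
    (hb : b ∈ (C.rotate a haC).support) :
    arcSupport C a b = ((C.rotate a haC).takeUntil b hb).support := by
  have hex : ∃ (h : a ∈ C.support), b ∈ (C.rotate a h).support := ⟨haC, hb⟩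
  rw [arcSupport, dif_pos hex]

lemma arcLen_spec {v a b : V} {C : G.Walk v v} (haC : a ∈ C.support)
    (hb : b ∈ (C.rotate a haC).support) :
    arcLen C a b = ((C.rotate a haC).takeUntil b hb).length := by
  have hex : ∃ (h : a ∈ C.support), b ∈ (C.rotate a h).support := ⟨haC, hb⟩
  rw [arcLen, dif_pos hex]

end Helpers

/-- **Claim 1.** Let `C` be a longest cycle, `P = x₁→x₂` a longest path in `G ∖ C` of
length `p̄`, with `N_C(x₁) = N_C(x₂)`. Let `I_a = ξ_a→ξ_a'` and `I_b = ξ_b→ξ_b'` be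
distinct elementary segments, `y` interior to `I_a` and `z` interior to `I_b`. If
`|ξ_a→y| + |ξ_b→z| ≤ p̄ + 2`, then `yz ∉ E(G)`. -/
theorem claim1 {V : Type*} [Fintype V] [DecidableEq V]
    (G : SimpleGraph V) {v x₁ x₂ ξa ξa' ξb ξb' y z : V}
    (C : G.Walk v v) (P : G.Walk x₁ x₂)
    (hC : IsLongestCycle G C) (hP : IsLongestPathOff G C.support P)
    (hN : nbrsOn G C.support x₁ = nbrsOn G C.support x₂)
    (ha : ConsecOnC C (nbrsOn G C.support x₁) ξa ξa')
    (hb : ConsecOnC C (nbrsOn G C.support x₁) ξb ξb')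
    (hab : ξa ≠ ξb)
    (hy : InteriorArc C ξa ξa' y) (hz : InteriorArc C ξb ξb' z)
    (hlen : arcLen C ξa y + arcLen C ξb z ≤ P.length + 2) :
    ¬ G.Adj y z := by
  intro hyz
  classical
  obtain ⟨hCc, hCmax⟩ := hC
  obtain ⟨hPp, hPoff, -⟩ := hP
  obtain ⟨⟨hξaC, hx1ξa⟩, hNa', hξaa', hIa⟩ := ha
  obtain ⟨⟨hξbC, hx1ξb⟩, hNb', hξbb', hIb⟩ := hb
  have hξbN2 : ξb ∈ nbrsOn G C.support x₂ := by
    rw [← hN]; exact ⟨hξbC, hx1ξb⟩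
  obtain ⟨-, hx2ξb⟩ := hξbN2
  -- basic facts about y
  have hynN : y ∉ nbrsOn G C.support x₁ := hIa y hy.1 hy.2.1 hy.2.2
  obtain ⟨h1, hξa'Ra⟩ := arcSupport_exists hy.1
  have hyTA : y ∈ ((C.rotate ξa hξaC).takeUntil ξa' hξa'Ra).support := by
    have := hy.1
    rwa [arcSupport_spec hξaC hξa'Ra] at this
  have hyRa : y ∈ (C.rotate ξa hξaC).support :=
    Walk.support_takeUntil_subset _ _ hyTA
  have hRaCyc : (C.rotate ξa hξaC).IsCycle := hCc.rotate hξaC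
  -- the two pieces of Ra at y
  have hr : arcLen C ξa y = ((C.rotate ξa hξaC).takeUntil y hyRa).length :=
    arcLen_spec hξaC hyRa
  have e_A1 : (C.rotate ξa hξaC).takeUntil y hyRa
      = ((C.rotate ξa hξaC).takeUntil ξa' hξa'Ra).takeUntil y hyTA :=
    takeUntil_takeUntil' _ hξa'Ra hyTA hyRa
  have hA1sub : ((C.rotate ξa hξaC).takeUntil y hyRa).support ⊆ arcSupport C ξa ξa' := by
    rw [arcSupport_spec hξaC hξa'Ra, e_A1]
    exact Walk.support_takeUntil_subset _ _
  -- ξa' not in A1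
  have hξa'nA1 : ξa' ∉ ((C.rotate ξa hξaC).takeUntil y hyRa).support := by
    intro hmem
    have hcnt1 : ((C.rotate ξa hξaC).takeUntil ξa' hξa'Ra).support.count ξa' = 1 :=
      Walk.count_support_takeUntil_eq_one _ hξa'Ra
    have hTAspec : (((C.rotate ξa hξaC).takeUntil ξa' hξa'Ra).takeUntil y hyTA).append
        (((C.rotate ξa hξaC).takeUntil ξa' hξa'Ra).dropUntil y hyTA)
        = (C.rotate ξa hξaC).takeUntil ξa' hξa'Ra := Walk.take_spec _ hyTA
    have hTAsup : ((C.rotate ξa hξaC).takeUntil ξa' hξa'Ra).support =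
        (((C.rotate ξa hξaC).takeUntil ξa' hξa'Ra).takeUntil y hyTA).support ++
        (((C.rotate ξa hξaC).takeUntil ξa' hξa'Ra).dropUntil y hyTA).support.tail := by
      conv_lhs => rw [← hTAspec]
      rw [Walk.support_append]
    have hmem1 : ξa' ∈ (((C.rotate ξa hξaC).takeUntil ξa' hξa'Ra).takeUntil y hyTA).support := by
      rw [← e_A1]; exact hmem
    have hmem2 : ξa' ∈ (((C.rotate ξa hξaC).takeUntil ξa' hξa'Ra).dropUntil y hyTA).support.tail :=
      end_mem_support_tail _ hy.2.2
    have c1 := List.count_pos_iff.2 hmem1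
    have c2 := List.count_pos_iff.2 hmem2
    rw [hTAsup, List.count_append] at hcnt1
    omega
  have hξbnN : ξb ∈ nbrsOn G C.support x₁ := ⟨hξbC, hx1ξb⟩
  have hξbny : ξb ≠ y := fun he => hynN (he ▸ hξbnN)
  have hξbnA1 : ξb ∉ ((C.rotate ξa hξaC).takeUntil y hyRa).support := by
    intro hmem
    rcases eq_or_ne ξb ξa' with heq | hne
    · exact hξa'nA1 (heq ▸ hmem)
    · exact hIa ξb (hA1sub hmem) (Ne.symm hab) hne hξbnN
  -- ξb in A2
  have hsupRa : (C.rotate ξa hξaC).support =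
      ((C.rotate ξa hξaC).takeUntil y hyRa).support ++
      ((C.rotate ξa hξaC).dropUntil y hyRa).support.tail := by
    conv_lhs => rw [← Walk.take_spec _ hyRa]
    rw [Walk.support_append]
  have hξbRa : ξb ∈ (C.rotate ξa hξaC).support := (mem_rotate_support hξaC).2 hξbC
  have hξbA2t : ξb ∈ ((C.rotate ξa hξaC).dropUntil y hyRa).support.tail := by
    rcases List.mem_append.mp (hsupRa ▸ hξbRa) with h' | h'
    · exact absurd h' hξbnA1
    · exact h'
  have hξbA2 : ξb ∈ ((C.rotate ξa hξaC).dropUntil y hyRa).support := List.mem_of_mem_tail hξbA2t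
  -- A2 is a path
  have hRat_eq : (C.rotate ξa hξaC).support.tail =
      ((C.rotate ξa hξaC).takeUntil y hyRa).support.tail ++
      ((C.rotate ξa hξaC).dropUntil y hyRa).support.tail := by
    rw [hsupRa, List.tail_append_of_ne_nil (Walk.support_ne_nil _)]
  have hA2t_nodup : ((C.rotate ξa hξaC).dropUntil y hyRa).support.tail.Nodup := by
    have := hRaCyc.support_nodup
    rw [hRat_eq] at this
    exact (List.sublist_append_right _ _).nodup this
  have hynA2t : y ∉ ((C.rotate ξa hξaC).dropUntil y hyRa).support.tail := by
    intro hmem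
    have hcy : (C.rotate ξa hξaC).support.count y = 1 :=
      count_eq_one_of_cycle hRaCyc hy.2.1 hyRa
    have c1 := List.count_pos_iff.2 (Walk.end_mem_support ((C.rotate ξa hξaC).takeUntil y hyRa))
    have c2 := List.count_pos_iff.2 hmem
    rw [hsupRa, List.count_append] at hcy
    omega
  have hA2_nodup : ((C.rotate ξa hξaC).dropUntil y hyRa).support.Nodup := by
    rw [Walk.support_eq_cons]
    exact List.nodup_cons.2 ⟨hynA2t, hA2t_nodup⟩
  have hA2path : ((C.rotate ξa hξaC).dropUntil y hyRa).IsPath := Walk.IsPath.mk' hA2_nodup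
  have hC2path : (((C.rotate ξa hξaC).dropUntil y hyRa).takeUntil ξb hξbA2).IsPath :=
    hA2path.takeUntil _
  have hD2path : (((C.rotate ξa hξaC).dropUntil y hyRa).dropUntil ξb hξbA2).IsPath :=
    hA2path.dropUntil _
  -- rotation at ξb
  have hEqRb : C.rotate ξb hξbC =
      (((C.rotate ξa hξaC).dropUntil y hyRa).dropUntil ξb hξbA2).append
      ((((C.rotate ξa hξaC).takeUntil y hyRa)).append
        (((C.rotate ξa hξaC).dropUntil y hyRa).takeUntil ξb hξbA2)) := by
    rw [← rotate_rotate hCc hξaC hξbC hξbRa (Ne.symm hab)]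
    show ((C.rotate ξa hξaC).dropUntil ξb hξbRa).append ((C.rotate ξa hξaC).takeUntil ξb hξbRa) = _
    congr 1
    · rw [dropUntil_congr ((C.rotate ξa hξaC).take_spec hyRa).symm hξbRa]
      exact dropUntil_append_right _ _ hξbnA1 hξbA2 _
    · rw [takeUntil_congr ((C.rotate ξa hξaC).take_spec hyRa).symm hξbRa]
      exact takeUntil_append_right _ _ hξbnA1 hξbA2 _
  -- facts about z
  have hznN : z ∉ nbrsOn G C.support x₁ := hIb z hz.1 hz.2.1 hz.2.2
  obtain ⟨h2, hξb'Rb⟩ := arcSupport_exists hz.1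
  have hzTB : z ∈ ((C.rotate ξb hξbC).takeUntil ξb' hξb'Rb).support := by
    have := hz.1
    rwa [arcSupport_spec hξbC hξb'Rb] at this
  have hzRb : z ∈ (C.rotate ξb hξbC).support := Walk.support_takeUntil_subset _ _ hzTB
  have hz_ne_ξa : z ≠ ξa := fun he => hznN (he ▸ (⟨hξaC, hx1ξa⟩ : ξa ∈ nbrsOn G C.support x₁))
  -- z lies in D2
  have hzD2 : z ∈ (((C.rotate ξa hξaC).dropUntil y hyRa).dropUntil ξb hξbA2).support := by
    by_contra hnz
    have hsupRb : (C.rotate ξb hξbC).support =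
        (((C.rotate ξa hξaC).dropUntil y hyRa).dropUntil ξb hξbA2).support ++
        ((((C.rotate ξa hξaC).takeUntil y hyRa)).append
          (((C.rotate ξa hξaC).dropUntil y hyRa).takeUntil ξb hξbA2)).support.tail := by
      rw [hEqRb, Walk.support_append]
    have hz2 : z ∈ ((((C.rotate ξa hξaC).takeUntil y hyRa)).append
        (((C.rotate ξa hξaC).dropUntil y hyRa).takeUntil ξb hξbA2)).support.tail := by
      rcases List.mem_append.mp (hsupRb ▸ hzRb) with h' | h'
      · exact absurd h' hnz
      · exact h'
    have hz2' := List.mem_of_mem_tail hz2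
    have e1 : (C.rotate ξb hξbC).takeUntil z hzRb =
        (((C.rotate ξa hξaC).dropUntil y hyRa).dropUntil ξb hξbA2).append
        (((((C.rotate ξa hξaC).takeUntil y hyRa)).append
          (((C.rotate ξa hξaC).dropUntil y hyRa).takeUntil ξb hξbA2)).takeUntil z hz2') := by
      rw [takeUntil_congr hEqRb hzRb]
      exact takeUntil_append_right _ _ hnz hz2' _
    have hξamem : ξa ∈ ((C.rotate ξb hξbC).takeUntil z hzRb).support := by
      rw [e1, Walk.mem_support_append_iff]
      exact Or.inl (Walk.end_mem_support _)
    have e2 : (C.rotate ξb hξbC).takeUntil z hzRb =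
        ((C.rotate ξb hξbC).takeUntil ξb' hξb'Rb).takeUntil z hzTB :=
      takeUntil_takeUntil' _ hξb'Rb hzTB hzRb
    have hξa_arc : ξa ∈ arcSupport C ξb ξb' := by
      rw [arcSupport_spec hξbC hξb'Rb]
      exact Walk.support_takeUntil_subset _ _ (e2 ▸ hξamem)
    have hξa_eq : ξa = ξb' := by
      by_contra hne
      exact hIb ξa hξa_arc hab hne ⟨hξaC, hx1ξa⟩
    subst hξa_eq
    -- now the arc ξb → ξa equals D2, hence z ∈ D2
    have hξaD2 : ξa ∈ (((C.rotate ξa hξaC).dropUntil y hyRa).dropUntil ξb hξbA2).support :=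
      Walk.end_mem_support _
    have e3 : (C.rotate ξb hξbC).takeUntil ξa hξb'Rb =
        (((C.rotate ξa hξaC).dropUntil y hyRa).dropUntil ξb hξbA2).takeUntil ξa hξaD2 := by
      rw [takeUntil_congr hEqRb hξb'Rb]
      exact takeUntil_append_left _ _ hξaD2 _
    have e4 : (((C.rotate ξa hξaC).dropUntil y hyRa).dropUntil ξb hξbA2).takeUntil ξa hξaD2 =
        ((C.rotate ξa hξaC).dropUntil y hyRa).dropUntil ξb hξbA2 := by
      apply takeUntil_end
      exact List.nodup_iff_count_le_one.mp hD2path.support_nodup ξa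
    apply hnz
    rw [e3, e4] at hzTB
    exact hzTB
  -- arc length of ξb → z
  have hs : arcLen C ξb z =
      ((((C.rotate ξa hξaC).dropUntil y hyRa).dropUntil ξb hξbA2).takeUntil z hzD2).length := by
    rw [arcLen_spec hξbC hzRb, takeUntil_congr hEqRb hzRb]
    rw [takeUntil_append_left _ _ hzD2]
  have hFpath : ((((C.rotate ξa hξaC).dropUntil y hyRa).dropUntil ξb hξbA2).dropUntil z hzD2).IsPath :=
    hD2path.dropUntil _
  -- z in tail of D2, y ≠ z
  have hzD2t : z ∈ (((C.rotate ξa hξaC).dropUntil y hyRa).dropUntil ξb hξbA2).support.tail := by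
    have := hzD2
    rw [Walk.support_eq_cons] at this
    cases this with
    | head => exact absurd rfl hz.2.1
    | tail _ h' => exact h'
  have hA2supspec : ((C.rotate ξa hξaC).dropUntil y hyRa).support =
      (((C.rotate ξa hξaC).dropUntil y hyRa).takeUntil ξb hξbA2).support ++
      (((C.rotate ξa hξaC).dropUntil y hyRa).dropUntil ξb hξbA2).support.tail := by
    conv_lhs => rw [← Walk.take_spec _ hξbA2]
    rw [Walk.support_append]
  have hD2t_sub : (((C.rotate ξa hξaC).dropUntil y hyRa).dropUntil ξb hξbA2).support.tail ⊆
      ((C.rotate ξa hξaC).dropUntil y hyRa).support.tail := by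
    intro w hw
    rw [hA2supspec, List.tail_append_of_ne_nil (Walk.support_ne_nil _)]
    exact List.mem_append.2 (Or.inr hw)
  have hyz_ne : y ≠ z := fun he => hynA2t (he ▸ hD2t_sub hzD2t)
  -- supports inside C
  have hA2subC : ∀ w ∈ ((C.rotate ξa hξaC).dropUntil y hyRa).support, w ∈ C.support := by
    intro w hw
    exact (mem_rotate_support hξaC).1 (Walk.support_dropUntil_subset _ hyRa hw)
  have hC2subC : ∀ w ∈ (((C.rotate ξa hξaC).dropUntil y hyRa).takeUntil ξb hξbA2).support,
      w ∈ C.support := fun w hw => hA2subC w (Walk.support_takeUntil_subset _ _ hw)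
  have hD2subC : ∀ w ∈ (((C.rotate ξa hξaC).dropUntil y hyRa).dropUntil ξb hξbA2).support,
      w ∈ C.support := fun w hw => hA2subC w (Walk.support_dropUntil_subset _ _ hw)
  have hFsubD2t : ∀ w ∈ ((((C.rotate ξa hξaC).dropUntil y hyRa).dropUntil ξb hξbA2).dropUntil z hzD2).support,
      w ∈ (((C.rotate ξa hξaC).dropUntil y hyRa).dropUntil ξb hξbA2).support.tail := by
    intro w hw
    rw [Walk.support_eq_cons] at hw
    cases hw with
    | head => exact hzD2t
    | tail _ h' =>
      have hD2spec : (((C.rotate ξa hξaC).dropUntil y hyRa).dropUntil ξb hξbA2).support =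
          ((((C.rotate ξa hξaC).dropUntil y hyRa).dropUntil ξb hξbA2).takeUntil z hzD2).support ++
          ((((C.rotate ξa hξaC).dropUntil y hyRa).dropUntil ξb hξbA2).dropUntil z hzD2).support.tail := by
        conv_lhs => rw [← Walk.take_spec _ hzD2]
        rw [Walk.support_append]
      rw [hD2spec, List.tail_append_of_ne_nil (Walk.support_ne_nil _)]
      exact List.mem_append.2 (Or.inr h')
  have hFsubC : ∀ w ∈ ((((C.rotate ξa hξaC).dropUntil y hyRa).dropUntil ξb hξbA2).dropUntil z hzD2).support,
      w ∈ C.support := fun w hw => hD2subC w (Walk.support_dropUntil_subset _ _ hw)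
  -- disjointness C2 vs F
  have hC2D2t_disj : ∀ w ∈ (((C.rotate ξa hξaC).dropUntil y hyRa).takeUntil ξb hξbA2).support,
      w ∉ (((C.rotate ξa hξaC).dropUntil y hyRa).dropUntil ξb hξbA2).support.tail := by
    have := hA2_nodup
    rw [hA2supspec, List.nodup_append] at this
    exact fun w hw hw' => this.2.2 w hw w hw' rfl
  -- build the new cycle
  have hadj1 : G.Adj ξa x₁ := hx1ξa.symm
  have hx1nC : x₁ ∉ C.support := hPoff x₁ (Walk.start_mem_support P)
  have hx2nC : x₂ ∉ C.support := hPoff x₂ (Walk.end_mem_support P)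
  set C2 := ((C.rotate ξa hξaC).dropUntil y hyRa).takeUntil ξb hξbA2 with hC2def
  set Fw := (((C.rotate ξa hξaC).dropUntil y hyRa).dropUntil ξb hξbA2).dropUntil z hzD2 with hFdef
  set Q := P.append (Walk.cons hx2ξb (C2.reverse.append (Walk.cons hyz Fw))) with hQdef
  have hQsup : Q.support = P.support ++ (C2.reverse.support ++ Fw.support) := by
    rw [hQdef, Walk.support_append, Walk.support_cons, List.tail_cons, Walk.support_append,
      Walk.support_cons, List.tail_cons]
  have hQnodup : Q.support.Nodup := by
    rw [hQsup]
    rw [List.nodup_append]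
    refine ⟨hPp.support_nodup, ?_, ?_⟩
    · rw [List.nodup_append]
      refine ⟨?_, hFpath.support_nodup, ?_⟩
      · rw [Walk.support_reverse]
        exact List.nodup_reverse.2 hC2path.support_nodup
      · intro w hw w' hw' hww'
        subst hww'
        rw [Walk.support_reverse, List.mem_reverse] at hw
        exact hC2D2t_disj w hw (hFsubD2t w hw')
    · intro w hw w' hw' hww'
      subst hww'
      have hwC : w ∈ C.support := by
        rcases List.mem_append.mp hw' with h' | h'
        · rw [Walk.support_reverse, List.mem_reverse] at h'
          exact hC2subC w h'
        · exact hFsubC w h'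
      exact hPoff w hw hwC
  have hQpath : Q.IsPath := Walk.IsPath.mk' hQnodup
  have hedge : s(ξa, x₁) ∉ Q.edges := by
    intro hmem
    rw [hQdef, Walk.edges_append, Walk.edges_cons, Walk.edges_append, Walk.edges_cons] at hmem
    rcases List.mem_append.mp hmem with h' | h'
    · exact hPoff ξa (Walk.fst_mem_support_of_mem_edges P h') hξaC
    · rw [List.mem_cons] at h'
      rcases h' with h' | h'
      · rw [Sym2.eq_iff] at h'
        rcases h' with ⟨he1, he2⟩ | ⟨he1, he2⟩
        · exact hx1nC (he2 ▸ hξbC)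
        · exact hab he1
      · rcases List.mem_append.mp h' with h'' | h''
        · have : x₁ ∈ C2.reverse.support :=
            Walk.snd_mem_support_of_mem_edges _ h''
          rw [Walk.support_reverse, List.mem_reverse] at this
          exact hx1nC (hC2subC x₁ this)
        · rw [List.mem_cons] at h''
          rcases h'' with h'' | h''
          · rw [Sym2.eq_iff] at h''
            rcases h'' with ⟨he1, he2⟩ | ⟨he1, he2⟩
            · exact hx1nC (he2 ▸ hD2subC z (Walk.support_takeUntil_subset _ hzD2
                (Walk.end_mem_support _)) )
            · exact hx1nC (he2 ▸ hA2subC y (Walk.start_mem_support _))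
          · have : x₁ ∈ Fw.support := Walk.snd_mem_support_of_mem_edges _ h''
            exact hx1nC (hFsubC x₁ this)
  have hWcyc : (Walk.cons hadj1 Q).IsCycle :=
    (Walk.cons_isCycle_iff Q hadj1).2 ⟨hQpath, hedge⟩
  have hle := hCmax ξa (Walk.cons hadj1 Q) hWcyc
  -- length computations
  have hlen1 : C.length = (C.rotate ξa hξaC).length := (length_rotate hξaC).symm
  have hlen2 : (C.rotate ξa hξaC).length =
      ((C.rotate ξa hξaC).takeUntil y hyRa).length + ((C.rotate ξa hξaC).dropUntil y hyRa).length := by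
    conv_lhs => rw [← Walk.take_spec _ hyRa]
    rw [Walk.length_append]
  have hlen3 : ((C.rotate ξa hξaC).dropUntil y hyRa).length =
      C2.length + (((C.rotate ξa hξaC).dropUntil y hyRa).dropUntil ξb hξbA2).length := by
    conv_lhs => rw [← Walk.take_spec _ hξbA2]
    rw [Walk.length_append]
  have hlen4 : (((C.rotate ξa hξaC).dropUntil y hyRa).dropUntil ξb hξbA2).length =
      ((((C.rotate ξa hξaC).dropUntil y hyRa).dropUntil ξb hξbA2).takeUntil z hzD2).length
      + Fw.length := by
    conv_lhs => rw [← Walk.take_spec _ hzD2]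
    rw [Walk.length_append]
  have hWlen : (Walk.cons hadj1 Q).length =
      P.length + 1 + (1 + (C2.length + (1 + Fw.length))) := by
    rw [Walk.length_cons, hQdef, Walk.length_append, Walk.length_cons, Walk.length_append,
      Walk.length_cons, Walk.length_reverse]
    omega
  rw [hr] at hlen
  rw [hs] at hlen
  omega

end ToughPaper
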